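/- Soft backup dominates every policy-evaluation backup: for every conditional policy π, every opponent model ρ, and every Q : S × A × B → ℝ, (𝒯_{π,ρ}Q)(s,a,b) ≤ (𝒯Q)(s,a,b) for all (s,a,b), where (𝒯Q)(s,a,b) = R(s,a,b) + γ·∑_{s'} p(s,a,b,s')·log(∑_{b'} P(s',b')·(∑_{a'} exp(Q(s',a',b')/α))^α) and (𝒯_{π,ρ}Q)(s,a,b) = R(s,a,b) + γ·∑_{s'} p(s,a,b,s')·( ∑_{b'} ρ(s',b')·( ∑_{a'} π(s',b',a')·(Q(s',a',b') − α·log π(s',b',a')) ) − ∑_{b'} ρ(s',b')·log(ρ(s',b')/P(s',b')) ). -/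

import Mathlib

lemma gibbs_aux {ι : Type*} [Fintype ι] (w x : ι → ℝ)
    (hw : ∀ i, 0 ≤ w i) (hws : ∑ i, w i = 1) (hx : ∀ i, 0 < x i) :
    ∑ i, w i * (Real.log (x i) - Real.log (w i)) ≤ Real.log (∑ i, x i) := by
  have hne : (Finset.univ : Finset ι).Nonempty := by
    by_contra h
    rw [Finset.not_nonempty_iff_eq_empty] at h
    simp [h] at hws
  set T : ℝ := ∑ i, x i with hTdef
  have hT : 0 < T := Finset.sum_pos (fun i _ => hx i) hne
  have hterm : ∀ i, w i * (Real.log (x i) - Real.log (w i))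
      ≤ x i / T - w i + w i * Real.log T := by
    intro i
    rcases eq_or_lt_of_le (hw i) with h0 | hpos
    · rw [← h0]
      have : 0 ≤ x i / T := le_of_lt (div_pos (hx i) hT)
      simp [this]
    · have hxw : 0 < x i / (w i * T) := div_pos (hx i) (mul_pos hpos hT)
      have hlog : Real.log (x i / (w i * T)) ≤ x i / (w i * T) - 1 :=
        Real.log_le_sub_one_of_pos hxw
      have heq : Real.log (x i) - Real.log (w i)
          = Real.log (x i / (w i * T)) + Real.log T := by
        rw [Real.log_div (ne_of_gt (hx i)) (ne_of_gt (mul_pos hpos hT)),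
          Real.log_mul (ne_of_gt hpos) (ne_of_gt hT)]
        ring
      rw [heq]
      have := mul_le_mul_of_nonneg_left hlog (le_of_lt hpos)
      have hdiv : w i * (x i / (w i * T)) = x i / T := by
        field_simp
      nlinarith [this, hdiv]
  calc ∑ i, w i * (Real.log (x i) - Real.log (w i))
      ≤ ∑ i, (x i / T - w i + w i * Real.log T) :=
        Finset.sum_le_sum (fun i _ => hterm i)
    _ = Real.log T := by
        rw [Finset.sum_add_distrib, Finset.sum_sub_distrib, ← Finset.sum_div,
          ← Finset.sum_mul, hws, ← hTdef, div_self (ne_of_gt hT)]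
        ring



/-- The soft Bellman operator
(𝒯Q)(s,a,b) = R(s,a,b) + γ·∑_{s'} p(s,a,b,s')·log ∑_{b'} P(s',b')·(∑_{a'} exp(Q(s',a',b')/α))^α. -/
noncomputable def softBellman {S A B : Type*} [Fintype S] [Fintype A] [Fintype B]
    (α γ : ℝ) (R : S × A × B → ℝ) (p : S → A → B → S → ℝ) (P : S → B → ℝ)
    (Q : S × A × B → ℝ) : S × A × B → ℝ :=
  fun x => R x + γ * ∑ s', p x.1 x.2.1 x.2.2 s' *
    Real.log (∑ b', P s' b' * (∑ a', Real.exp (Q (s', a', b') / α)) ^ α)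

/-- The policy-evaluation operator
(𝒯_{π,ρ}Q)(s,a,b) = R(s,a,b) + γ·∑_{s'} p(s,a,b,s')·( ∑_{b'} ρ(s',b')·( ∑_{a'}
π(s',b',a')·(Q(s',a',b') − α·log π(s',b',a')) ) − ∑_{b'} ρ(s',b')·log(ρ(s',b')/P(s',b')) ). -/
noncomputable def evalOp {S A B : Type*} [Fintype S] [Fintype A] [Fintype B]
    (α γ : ℝ) (R : S × A × B → ℝ) (p : S → A → B → S → ℝ) (P : S → B → ℝ)
    (π : S → B → A → ℝ) (ρ : S → B → ℝ)
    (Q : S × A × B → ℝ) : S × A × B → ℝ :=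
  fun x => R x + γ * ∑ s', p x.1 x.2.1 x.2.2 s' *
    ((∑ b', ρ s' b' *
        (∑ a', π s' b' a' * (Q (s', a', b') - α * Real.log (π s' b' a'))))
      - ∑ b', ρ s' b' * Real.log (ρ s' b' / P s' b'))

/-- Soft backup dominates every policy-evaluation backup: for every
conditional policy π, every opponent model ρ, and every Q,
(𝒯_{π,ρ}Q)(s,a,b) ≤ (𝒯Q)(s,a,b) for all (s,a,b). -/
theorem evalOp_le_softBellman
    {S A B : Type*} [Fintype S] [Fintype A] [Fintype B]
    [Nonempty S] [Nonempty A] [Nonempty B]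
    (α γ : ℝ) (hα : 0 < α) (hγ₀ : 0 ≤ γ) (hγ₁ : γ < 1)
    (R : S × A × B → ℝ)
    (p : S → A → B → S → ℝ)
    (hp_nonneg : ∀ s a b s', 0 ≤ p s a b s') (hp_sum : ∀ s a b, ∑ s', p s a b s' = 1)
    (P : S → B → ℝ) (hP_pos : ∀ s b, 0 < P s b) (hP_sum : ∀ s, ∑ b, P s b = 1)
    (π : S → B → A → ℝ)
    (hπ_nonneg : ∀ s b a, 0 ≤ π s b a) (hπ_sum : ∀ s b, ∑ a, π s b a = 1)
    (ρ : S → B → ℝ)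
    (hρ_nonneg : ∀ s b, 0 ≤ ρ s b) (hρ_sum : ∀ s, ∑ b, ρ s b = 1)
    (Q : S × A × B → ℝ) :
    ∀ x : S × A × B, evalOp α γ R p P π ρ Q x ≤ softBellman α γ R p P Q x := by
  intro x
  simp only [evalOp, softBellman]
  apply add_le_add le_rfl
  apply mul_le_mul_of_nonneg_left _ hγ₀
  apply Finset.sum_le_sum
  intro s' _
  apply mul_le_mul_of_nonneg_left _ (hp_nonneg x.1 x.2.1 x.2.2 s')
  -- Step 1: inner soft-max bound for each b'
  have step1 : ∀ b' : B,
      (∑ a', π s' b' a' * (Q (s', a', b') - α * Real.log (π s' b' a')))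
        ≤ α * Real.log (∑ a', Real.exp (Q (s', a', b') / α)) := by
    intro b'
    have h := gibbs_aux (π s' b') (fun a' => Real.exp (Q (s', a', b') / α))
      (hπ_nonneg s' b') (hπ_sum s' b') (fun a' => Real.exp_pos _)
    simp only [Real.log_exp] at h
    have h2 := mul_le_mul_of_nonneg_left h (le_of_lt hα)
    calc (∑ a', π s' b' a' * (Q (s', a', b') - α * Real.log (π s' b' a')))
        = α * ∑ a', π s' b' a' * (Q (s', a', b') / α - Real.log (π s' b' a')) := by
          rw [Finset.mul_sum]
          apply Finset.sum_congr rfl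
          intro a' _
          field_simp
      _ ≤ α * Real.log (∑ a', Real.exp (Q (s', a', b') / α)) := h2
  -- Step 2: outer bound over b'
  have hxpos : ∀ b' : B, 0 < P s' b' * (∑ a', Real.exp (Q (s', a', b') / α)) ^ α := by
    intro b'
    apply mul_pos (hP_pos s' b')
    apply Real.rpow_pos_of_pos
    exact Finset.sum_pos (fun a' _ => Real.exp_pos _) Finset.univ_nonempty
  have h := gibbs_aux (ρ s') (fun b' => P s' b' * (∑ a', Real.exp (Q (s', a', b') / α)) ^ α)
    (hρ_nonneg s') (hρ_sum s') hxpos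
  refine le_trans ?_ h
  rw [← Finset.sum_sub_distrib]
  apply Finset.sum_le_sum
  intro b' _
  rcases eq_or_lt_of_le (hρ_nonneg s' b') with h0 | hpos
  · simp [← h0]
  · have hspos : (0:ℝ) < ∑ a', Real.exp (Q (s', a', b') / α) :=
      Finset.sum_pos (fun a' _ => Real.exp_pos _) Finset.univ_nonempty
    have hlogx : Real.log (P s' b' * (∑ a', Real.exp (Q (s', a', b') / α)) ^ α)
        = Real.log (P s' b') + α * Real.log (∑ a', Real.exp (Q (s', a', b') / α)) := by
      rw [Real.log_mul (ne_of_gt (hP_pos s' b'))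
        (ne_of_gt (Real.rpow_pos_of_pos hspos α)), Real.log_rpow hspos]
    have hlogdiv : Real.log (ρ s' b' / P s' b')
        = Real.log (ρ s' b') - Real.log (P s' b') := by
      rw [Real.log_div (ne_of_gt hpos) (ne_of_gt (hP_pos s' b'))]
    rw [hlogx, hlogdiv]
    have := mul_le_mul_of_nonneg_left (step1 b') (le_of_lt hpos)
    nlinarith [this]
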